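/- arXiv:2108.11279 — 4 statements merged into one kernel-verified Lean document; each statement's English description precedes it below -/
import Mathlib

section
/- Let G = (A, φ, w) be a D0L-system with non-erasing morphism φ and let H = (A, φ, w, Ψ) be an HD0L-system over it. If the language L_G is uniformly recurrent and L_H contains an infinite repetition v^ω (i.e., a primitive word v with v^k ∈ L_H for all k), then L_H equals the set of all factors of the periodic infinite word v^ω = vvv⋯. -/
/-- The extension of the morphism given by `φ` on letters to a morphism on words. -/
def extM {A B : Type*} (φ : A → List B) (w : List A) : List B := w.flatMap φ

/-- The `k`-th power `u^k` of a word `u`. -/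
def wpow {A : Type*} (u : List A) (k : ℕ) : List A := (List.replicate k u).flatten

/-- A word `v` is primitive if `v = u^k` implies `k = 1`. -/
def Primitive {A : Type*} (v : List A) : Prop :=
  v ≠ [] ∧ ∀ (u : List A) (k : ℕ), v = wpow u k → k = 1

/-- The language of the D0L-system `(A, φ, w)`: all factors of the words `φ^n(w)`. -/
def LangD0L {A : Type*} (φ : A → List A) (w : List A) : Set (List A) :=
  {v | ∃ n : ℕ, v <:+: (extM φ)^[n] w}

/-- `fact(Ψ(L))`: all factors of `Ψ`-images of elements of `L`. -/
def factImg {A B : Type*} (Ψ : A → List B) (L : Set (List A)) : Set (List B) :=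
  {v | ∃ u ∈ L, v <:+: extM Ψ u}

/-- The language of the HD0L-system `(A, φ, w, Ψ)`. -/
def LangHD0L {A B : Type*} (φ : A → List A) (w : List A) (Ψ : A → List B) : Set (List B) :=
  factImg Ψ (LangD0L φ w)

/-- A morphism is non-erasing if no letter is mapped to the empty word. -/
def NonErasing {A B : Type*} (φ : A → List B) : Prop := ∀ a, φ a ≠ []

/-- A letter `b` is bounded (w.r.t. `φ`) if the lengths `|φ^n(b)|` are bounded. -/
def BddLetter {A : Type*} (φ : A → List A) (b : A) : Prop :=
  ∃ C : ℕ, ∀ n : ℕ, ((extM φ)^[n] [b]).length ≤ C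

/-- The set of letters occurring in a word. -/
def alph {A : Type*} (u : List A) : Set A := {a | a ∈ u}

/-- `alph(φ(S))` for a set of letters `S`: letters occurring in `φ(b)` for some `b ∈ S`. -/
def alphIm {A : Type*} (φ : A → List A) (S : Set A) : Set A := ⋃ b ∈ S, alph (φ b)

/-- A D0L-system is pushy if its language contains infinitely many words over bounded letters. -/
def Pushy {A : Type*} (φ : A → List A) (w : List A) : Prop :=
  {v ∈ LangD0L φ w | ∀ a ∈ v, BddLetter φ a}.Infinite

/-- A factorial language `L` is uniformly recurrent: for every `n` there is `K` such that
every element of `L` of length `K` contains every element of `L` of length `n` as a factor. -/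
def UnifRec {A : Type*} (L : Set (List A)) : Prop :=
  ∀ n : ℕ, ∃ K : ℕ, ∀ u ∈ L, u.length = K → ∀ v ∈ L, v.length = n → v <:+: u

/-- Vertices of the tree of invariant subalphabets of `φ`: nonempty sets `S` with
`alph(φ(S)) = S` containing an unbounded letter `a` with `alph(φ(a)) = S`. -/
def IsVertex {A : Type*} (φ : A → List A) (S : Set A) : Prop :=
  S.Nonempty ∧ alphIm φ S = S ∧ ∃ a ∈ S, ¬ BddLetter φ a ∧ alph (φ a) = S

/-- Leaves of the tree of invariant subalphabets: minimal vertices w.r.t. inclusion. -/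
def IsLeaf {A : Type*} (φ : A → List A) (S : Set A) : Prop :=
  IsVertex φ S ∧ ∀ T, IsVertex φ T → T ⊆ S → T = S

/-- Two words are conjugate: `u = xy` and `v = yx`. -/
def Conj {A : Type*} (u v : List A) : Prop := ∃ x y : List A, u = x ++ y ∧ v = y ++ x

/-- The prefix of length `n` of an infinite word. -/
def prefW {A : Type*} (w : ℕ → A) (n : ℕ) : List A := (List.range n).map w

section helpers
variable {A B : Type*} (Ψ : A → List B)


lemma extM_append (u u' : List A) : extM Ψ (u ++ u') = extM Ψ u ++ extM Ψ u' :=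
  List.flatMap_append ..

lemma extM_cons (a : A) (u : List A) : extM Ψ (a :: u) = Ψ a ++ extM Ψ u :=
  List.flatMap_cons ..

lemma extM_infix {u u' : List A} (h : u <:+: u') : extM Ψ u <:+: extM Ψ u' := by
  obtain ⟨s, t, rfl⟩ := h
  exact ⟨extM Ψ s, extM Ψ t, by rw [extM_append, extM_append]⟩

variable {C : ℕ} (hC : ∀ a, (Ψ a).length ≤ C)
include hC

lemma extM_len (u : List A) : (extM Ψ u).length ≤ C * u.length := by
  induction u with
  | nil => simp [extM]
  | cons a u ih =>
    rw [extM_cons]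
    simp only [List.length_append, List.length_cons]
    calc (Ψ a).length + (extM Ψ u).length ≤ C + C * u.length := by
          exact Nat.add_le_add (hC a) ih
      _ = C * (u.length + 1) := by ring

lemma pref_lemma : ∀ (u : List A) (m s : List B), extM Ψ u = m ++ s →
    ∃ z m', z <+: u ∧ m = extM Ψ z ++ m' ∧ m'.length ≤ C := by
  intro u
  induction u with
  | nil =>
    intro m s h
    simp only [extM, List.flatMap_nil] at h
    have : m = [] := by
      have hl := congrArg List.length h
      simp only [List.length_nil, List.length_append] at hl
      exact List.eq_nil_of_length_eq_zero (by omega)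
    exact ⟨[], [], List.nil_prefix, by simp [extM, this], by simp⟩
  | cons a u ih =>
    intro m s h
    rw [extM_cons] at h
    by_cases h1 : m.length ≤ (Ψ a).length
    · exact ⟨[], m, List.nil_prefix, by simp [extM], le_trans h1 (hC a)⟩
    · push_neg at h1
      have hpa : Ψ a <+: m :=
        List.prefix_of_prefix_length_le ⟨extM Ψ u, h⟩ ⟨s, rfl⟩ (le_of_lt h1)
      obtain ⟨m1, rfl⟩ := hpa
      rw [List.append_assoc] at h
      have h2 : extM Ψ u = m1 ++ s := (List.append_cancel_left h)
      obtain ⟨z, m', hz, hm1, hm'⟩ := ih m1 s h2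
      exact ⟨a :: z, m', List.cons_prefix_cons.mpr ⟨rfl, hz⟩,
        by rw [extM_cons, hm1, List.append_assoc], hm'⟩

lemma suff_lemma : ∀ (u : List A) (p m : List B), extM Ψ u = p ++ m →
    ∃ z m', z <:+ u ∧ m = m' ++ extM Ψ z ∧ m'.length ≤ C := by
  intro u
  induction u with
  | nil =>
    intro p m h
    simp only [extM, List.flatMap_nil] at h
    have : m = [] := by
      have hl := congrArg List.length h
      simp only [List.length_nil, List.length_append] at hl
      exact List.eq_nil_of_length_eq_zero (by omega)
    exact ⟨[], [], List.nil_suffix, by simp [extM, this], by simp⟩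
  | cons a u ih =>
    intro p m h
    rw [extM_cons] at h
    by_cases h1 : (Ψ a).length ≤ p.length
    · have hpa : Ψ a <+: p :=
        List.prefix_of_prefix_length_le ⟨extM Ψ u, h⟩ ⟨m, rfl⟩ h1
      obtain ⟨p1, rfl⟩ := hpa
      rw [List.append_assoc] at h
      have h2 : extM Ψ u = p1 ++ m := List.append_cancel_left h
      obtain ⟨z, m', hz, hm, hm'⟩ := ih p1 m h2
      exact ⟨z, m', hz.trans (List.suffix_cons a u), hm, hm'⟩
    · push_neg at h1
      have hpa : p <+: Ψ a :=
        List.prefix_of_prefix_length_le ⟨m, h.symm⟩ ⟨extM Ψ u, rfl⟩ (le_of_lt h1)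
      obtain ⟨r, hr⟩ := hpa
      refine ⟨u, r, List.suffix_cons a u, ?_, le_trans (by
        have := congrArg List.length hr; simp at this; omega) (hC a)⟩
      rw [← hr, List.append_assoc] at h
      exact (List.append_cancel_left h).symm

lemma infix_lemma (u : List A) (p mid s : List B) (h : extM Ψ u = p ++ mid ++ s) :
    ∃ z, z <:+: u ∧ extM Ψ z <:+: mid ∧ mid.length ≤ C * (z.length + 2) := by
  rw [List.append_assoc] at h
  obtain ⟨z1, r, hz1, hms, hr⟩ := suff_lemma Ψ hC u p (mid ++ s) h
  by_cases h1 : mid.length ≤ r.length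
  · refine ⟨[], List.nil_infix, List.nil_infix, ?_⟩
    have h2 : mid.length ≤ C := le_trans h1 hr
    simp only [List.length_nil]
    omega
  · push_neg at h1
    have hrm : r <+: mid :=
      List.prefix_of_prefix_length_le ⟨extM Ψ z1, hms.symm⟩ ⟨s, rfl⟩ (le_of_lt h1)
    obtain ⟨mid1, rfl⟩ := hrm
    rw [List.append_assoc] at hms
    have h2 : extM Ψ z1 = mid1 ++ s := (List.append_cancel_left hms).symm
    obtain ⟨z, m', hz, hmid1, hm'⟩ := pref_lemma Ψ hC z1 mid1 s h2
    refine ⟨z, hz.isInfix.trans hz1.isInfix, ⟨r, m', by rw [hmid1, List.append_assoc]⟩, ?_⟩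
    have hlen : mid1.length = (extM Ψ z).length + m'.length := by
      rw [hmid1]; simp
    have h3 := extM_len Ψ hC z
    have h4 : C * (z.length + 2) = C * z.length + C + C := by ring
    simp only [List.length_append]
    omega

end helpers

section helpers2
variable {A B : Type*}


lemma LangD0L_factorial {φ : A → List A} {w : List A} {u u' : List A}
    (h : u' <:+: u) (hu : u ∈ LangD0L φ w) : u' ∈ LangD0L φ w := by
  obtain ⟨n, hn⟩ := hu; exact ⟨n, h.trans hn⟩

lemma wpow_length (v : List B) (k : ℕ) : (wpow v k).length = k * v.length := by
  simp [wpow]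


end helpers2

/-- If `L_G` is uniformly recurrent and `L_H` contains an infinite repetition
`v^ω`, then `L_H` equals the set of all factors of the periodic infinite word `v^ω`. -/
theorem stmt1 {A B : Type*} [Fintype A] [Fintype B]
    (φ : A → List A) (w : List A) (Ψ : A → List B) (hφ : NonErasing φ)
    (hUR : UnifRec (LangD0L φ w))
    (v : List B) (hv : Primitive v) (hvk : ∀ k : ℕ, wpow v k ∈ LangHD0L φ w Ψ) :
    LangHD0L φ w Ψ = {u : List B | ∃ k : ℕ, u <:+: wpow v k} := by
  have hvlen : 1 ≤ v.length := List.length_pos_iff.mpr hv.1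
  set C : ℕ := (Finset.univ.sup fun a : A => (Ψ a).length) + 1 with hCdef
  have hC : ∀ a, (Ψ a).length ≤ C := fun a => by
    have h := Finset.le_sup (f := fun a : A => (Ψ a).length) (Finset.mem_univ a)
    omega
  ext u
  simp only [Set.mem_setOf_eq]
  constructor
  · rintro ⟨x, hx, hux⟩
    obtain ⟨K, hK⟩ := hUR x.length
    set m : ℕ := C * (K + 2) + 1 with hm
    obtain ⟨y, hy, hvy⟩ := hvk m
    obtain ⟨p, s, hps⟩ := hvy
    obtain ⟨z, hzy, hzmid, hzlen⟩ := infix_lemma Ψ hC y p (wpow v m) s hps.symm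
    rw [wpow_length] at hzlen
    have hmz : K < z.length := by
      have h1 : m ≤ m * v.length := Nat.le_mul_of_pos_right m hvlen
      have e1 : C * (K + 2) = C * K + C + C := by ring
      have e2 : C * (z.length + 2) = C * z.length + C + C := by ring
      have h2 : C * K < C * z.length := by omega
      exact Nat.lt_of_mul_lt_mul_left h2
    -- take the prefix of z of length K
    have hzK : z.take K ∈ LangD0L φ w :=
      LangD0L_factorial ((z.take_prefix K).isInfix) (LangD0L_factorial hzy hy)
    have hxz : x <:+: z.take K :=
      hK (z.take K) hzK (by rw [List.length_take]; omega) x hx rfl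
    refine ⟨m, hux.trans ?_⟩
    exact ((extM_infix Ψ hxz).trans (extM_infix Ψ (z.take_prefix K).isInfix)).trans hzmid
  · rintro ⟨k, hk⟩
    obtain ⟨y, hy, hvy⟩ := hvk k
    exact ⟨y, hy, hk.trans hvy⟩
end

section
/- Let G = (A, φ, w) be a D0L-system with non-erasing morphism φ, and let p > 0 and q ≥ 0 be integers such that alph(φ^i(a)) = alph(φ^{i+p}(a)) for every letter a occurring in w and every i ≥ q. For 0 ≤ i < q + p define the D0L-systems G_i = (A_i, φ^p, φ^i(w)), where A_i is the union over letters a of w of alph(φ^i(a)). Then L_G = ∪_{0≤i<q+p} L_{G_i}, and for any morphism Ψ: A* → B*, the language L_H of the HD0L-system H = (A, φ, w, Ψ) satisfies L_H = ∪_{0≤i<q+p} fact(Ψ(L_{G_i})). -/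
lemma extM_nil_iter {A : Type*} (φ : A → List A) (k : ℕ) : (extM φ)^[k] [] = [] := by
  induction k with
  | zero => rfl
  | succ k ih => rw [Function.iterate_succ_apply, show extM φ [] = [] from rfl, ih]

lemma extM_iter_append {A : Type*} (φ : A → List A) (k : ℕ) (u v : List A) :
    (extM φ)^[k] (u ++ v) = (extM φ)^[k] u ++ (extM φ)^[k] v := by
  induction k generalizing u v with
  | zero => rfl
  | succ k ih =>
      rw [Function.iterate_succ_apply, Function.iterate_succ_apply,
        Function.iterate_succ_apply, show extM φ (u ++ v) = extM φ u ++ extM φ v from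
          List.flatMap_append .., ih]

lemma extM_pow {A : Type*} (φ : A → List A) (p : ℕ) :
    extM (fun a => (extM φ)^[p] [a]) = (extM φ)^[p] := by
  funext u
  induction u with
  | nil => exact (extM_nil_iter φ p).symm
  | cons a u ih =>
      have h1 : extM (fun a => (extM φ)^[p] [a]) (a :: u) =
          (extM φ)^[p] [a] ++ extM (fun a => (extM φ)^[p] [a]) u := by
        simp [extM]
      rw [h1, ih, ← extM_iter_append]
      rfl

lemma factImg_iUnion {A B ι : Type*} (Ψ : A → List B) (S : Set ι) (L : ι → Set (List A)) :
    factImg Ψ (⋃ i ∈ S, L i) = ⋃ i ∈ S, factImg Ψ (L i) := by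
  ext v
  simp only [factImg, Set.mem_iUnion, Set.mem_setOf_eq, exists_prop]
  constructor
  · rintro ⟨u, ⟨i, hi, hu⟩, hf⟩; exact ⟨i, hi, u, hu, hf⟩
  · rintro ⟨i, hi, u, hu, hf⟩; exact ⟨u, ⟨i, hi, hu⟩, hf⟩

/-- With `p > 0`, `q ≥ 0` such that `alph(φ^i(a)) = alph(φ^{i+p}(a))` for
every letter `a` of `w` and `i ≥ q`, and `G_i = (A_i, φ^p, φ^i(w))`, we have
`L_G = ⋃_{0 ≤ i < q+p} L_{G_i}` and `L_H = ⋃_{0 ≤ i < q+p} fact(Ψ(L_{G_i}))`. -/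
theorem stmt4 {A B : Type*} [Fintype A] [Fintype B]
    (φ : A → List A) (w : List A) (Ψ : A → List B) (hφ : NonErasing φ)
    (p q : ℕ) (hp : 0 < p)
    (hper : ∀ a ∈ w, ∀ i : ℕ, q ≤ i →
      alph ((extM φ)^[i] [a]) = alph ((extM φ)^[i + p] [a])) :
    LangD0L φ w = ⋃ i ∈ Set.Iio (q + p),
        LangD0L (fun a => (extM φ)^[p] [a]) ((extM φ)^[i] w) ∧
    LangHD0L φ w Ψ = ⋃ i ∈ Set.Iio (q + p),
        factImg Ψ (LangD0L (fun a => (extM φ)^[p] [a]) ((extM φ)^[i] w)) := by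
  have key : LangD0L φ w = ⋃ i ∈ Set.Iio (q + p),
      LangD0L (fun a => (extM φ)^[p] [a]) ((extM φ)^[i] w) := by
    ext v
    simp only [LangD0L, Set.mem_iUnion, Set.mem_setOf_eq, Set.mem_Iio, extM_pow,
      ← Function.iterate_mul, ← Function.iterate_add_apply, exists_prop]
    constructor
    · rintro ⟨m, hm⟩
      by_cases h : m < q + p
      · exact ⟨m, h, 0, by simpa using hm⟩
      · refine ⟨q + (m - q) % p, by have := Nat.mod_lt (m - q) hp; omega, (m - q) / p, ?_⟩
        have h2 := Nat.div_add_mod (m - q) p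
        have : p * ((m - q) / p) + (q + (m - q) % p) = m := by omega
        rwa [this]
    · rintro ⟨i, _, n, hn⟩
      exact ⟨p * n + i, hn⟩
  refine ⟨key, ?_⟩
  show factImg Ψ (LangD0L φ w) = _
  rw [key, factImg_iUnion]
end

section
/- Let φ: A* → A* be a non-erasing morphism over a finite alphabet A satisfying alph(φ^n(a)) = alph(φ(a)) for every a ∈ A and every n ≥ 1. Let A' be a leaf of the tree of invariant subalphabets of φ, i.e., a minimal element of the family of nonempty sets B ⊆ A satisfying alph(φ(B)) = B and B = alph(φ(a)) for some unbounded letter a ∈ B. Then for all unbounded letters a, b ∈ A', the letter b occurs in φ(a). -/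
section Helpers

variable {A : Type*}

lemma extM_singleton (φ : A → List A) (a : A) : extM φ [a] = φ a := by
  simp [extM]

lemma iter_flatMap (φ : A → List A) :
    ∀ (n : ℕ) (u : List A), (extM φ)^[n] u = u.flatMap (fun c => (extM φ)^[n] [c]) := by
  intro n
  induction n with
  | zero => intro u; simp
  | succ n ih =>
    intro u
    rw [Function.iterate_succ_apply, ih (extM φ u)]
    show (u.flatMap φ).flatMap _ = _
    rw [List.flatMap_assoc]
    congr 1
    funext c
    rw [Function.iterate_succ_apply, extM_singleton]
    exact (ih (φ c)).symm

lemma exists_unbounded_mem (φ : A → List A) (a : A) (hau : ¬ BddLetter φ a) :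
    ∃ c ∈ φ a, ¬ BddLetter φ c := by
  by_contra h
  push_neg at h
  apply hau
  classical
  set g : A → ℕ := fun c => if hc : BddLetter φ c then hc.choose else 0 with hg
  have hgspec : ∀ c, BddLetter φ c → ∀ n, ((extM φ)^[n] [c]).length ≤ g c := by
    intro c hc n
    simp only [hg, dif_pos hc]
    exact hc.choose_spec n
  refine ⟨max 1 (((φ a).map g).sum), fun n => ?_⟩
  cases n with
  | zero => simp
  | succ n =>
    rw [Function.iterate_succ_apply, extM_singleton, iter_flatMap]
    rw [List.length_flatMap]
    refine le_trans (List.sum_le_sum ?_) (le_max_right _ _)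
    intro c hc
    exact hgspec c (h c hc) n

lemma alph_sub_alphIm (φ : A → List A) {S : Set A} {c : A} (hc : c ∈ S) :
    alph (φ c) ⊆ alphIm φ S := by
  intro x hx
  simp only [alphIm, Set.mem_iUnion]
  exact ⟨c, hc, hx⟩

lemma iter_two (φ : A → List A) (a : A) : (extM φ)^[2] [a] = (φ a).flatMap φ := by
  rw [Function.iterate_succ_apply, Function.iterate_one, extM_singleton]
  rfl

lemma alphIm_alph (φ : A → List A)
    (hstar : ∀ (a : A) (n : ℕ), 1 ≤ n → alph ((extM φ)^[n] [a]) = alph (φ a))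
    (a : A) : alphIm φ (alph (φ a)) = alph (φ a) := by
  have h2 := hstar a 2 (by norm_num)
  rw [iter_two] at h2
  ext x
  constructor
  · intro hx
    simp only [alphIm, Set.mem_iUnion] at hx
    obtain ⟨c, hc, hxc⟩ := hx
    rw [← h2]
    exact List.mem_flatMap.mpr ⟨c, hc, hxc⟩
  · intro hx
    rw [← h2] at hx
    obtain ⟨c, hc, hxc⟩ := List.mem_flatMap.mp hx
    simp only [alphIm, Set.mem_iUnion]
    exact ⟨c, hc, hxc⟩

lemma exists_vertex [Fintype A] (φ : A → List A) (hφ : NonErasing φ)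
    (hstar : ∀ (a : A) (n : ℕ), 1 ≤ n → alph ((extM φ)^[n] [a]) = alph (φ a)) :
    ∀ (n : ℕ) (a : A), ¬ BddLetter φ a → (alph (φ a)).ncard ≤ n →
      ∃ S, IsVertex φ S ∧ S ⊆ alph (φ a) := by
  have hne : ∀ a : A, (alph (φ a)).Nonempty := by
    intro a
    obtain ⟨x, hx⟩ := List.exists_mem_of_ne_nil _ (hφ a)
    exact ⟨x, hx⟩
  intro n
  induction n with
  | zero =>
    intro a _ hcard
    exfalso
    have := (hne a).ncard_pos (Set.toFinite _)
    omega
  | succ n ih =>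
    intro a hau hcard
    obtain ⟨c, hc, hcu⟩ := exists_unbounded_mem φ a hau
    have hcA : c ∈ alph (φ a) := hc
    have hsub : alph (φ c) ⊆ alph (φ a) := by
      rw [← alphIm_alph φ hstar a]
      exact alph_sub_alphIm φ hcA
    by_cases heq : alph (φ c) = alph (φ a)
    · exact ⟨alph (φ a), ⟨hne a, alphIm_alph φ hstar a, c, hcA, hcu, heq⟩, subset_rfl⟩
    · have hlt : (alph (φ c)).ncard < (alph (φ a)).ncard :=
        Set.ncard_lt_ncard ⟨hsub, fun h => heq (le_antisymm hsub h)⟩ (Set.toFinite _)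
      obtain ⟨S, hS, hS'⟩ := ih c hcu (by omega)
      exact ⟨S, hS, hS'.trans hsub⟩

end Helpers

/-- Under Assumption ∗, if `A'` is a leaf of the tree of invariant
subalphabets, then for all unbounded `a, b ∈ A'`, the letter `b` occurs in `φ(a)`. -/
theorem stmt7 {A : Type*} [Fintype A] (φ : A → List A) (hφ : NonErasing φ)
    (hstar : ∀ (a : A) (n : ℕ), 1 ≤ n → alph ((extM φ)^[n] [a]) = alph (φ a))
    (A' : Set A) (hA' : IsLeaf φ A')
    (a b : A) (ha : a ∈ A') (hb : b ∈ A')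
    (hau : ¬ BddLetter φ a) (hbu : ¬ BddLetter φ b) :
    b ∈ alph (φ a) := by
  obtain ⟨⟨hAne, hAinv, _⟩, hmin⟩ := hA'
  have hsubA : alph (φ a) ⊆ A' := by
    rw [← hAinv]
    exact alph_sub_alphIm φ ha
  obtain ⟨S, hSv, hSs⟩ := exists_vertex φ hφ hstar (alph (φ a)).ncard a hau le_rfl
  have hSA : S = A' := hmin S hSv (hSs.trans hsubA)
  exact hSs (hSA ▸ hb)
end

section
/- Let G = (A, φ, w) be a pushy D0L-system with non-erasing morphism φ. Then there exist R_G ∈ ℕ and a finite set 𝒰 of non-empty words over bounded letters such that every element of L_G consisting only of bounded letters has one of the forms w₁, or w₁u₁^{k₁}w₂, or w₁u₁^{k₁}w₂u₂^{k₂}w₃, where u₁, u₂ ∈ 𝒰, |w_j| < R_G for all j ∈ {1,2,3}, and k₁, k₂ are positive integers. -/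
/-- The structural property of bounded-letter factors of a pushy D0L-system from
Theorem 12 of Klouda–Starosta (2013), for a constant `R`. -/
def Thm12Prop {A : Type*} (φ : A → List A) (w : List A) (R : ℕ) : Prop :=
  ∃ U : Set (List A), U.Finite ∧ (∀ u ∈ U, u ≠ [] ∧ ∀ a ∈ u, BddLetter φ a) ∧
    ∀ v ∈ LangD0L φ w, (∀ a ∈ v, BddLetter φ a) →
      (v.length < R) ∨
      (∃ (w₁ u₁ : List A) (k₁ : ℕ) (w₂ : List A), u₁ ∈ U ∧ 0 < k₁ ∧
        v = w₁ ++ wpow u₁ k₁ ++ w₂ ∧ w₁.length < R ∧ w₂.length < R) ∨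
      (∃ (w₁ u₁ : List A) (k₁ : ℕ) (w₂ u₂ : List A) (k₂ : ℕ) (w₃ : List A),
        u₁ ∈ U ∧ u₂ ∈ U ∧ 0 < k₁ ∧ 0 < k₂ ∧
        v = w₁ ++ wpow u₁ k₁ ++ w₂ ++ wpow u₂ k₂ ++ w₃ ∧
        w₁.length < R ∧ w₂.length < R ∧ w₃.length < R)

section Stmt14Aux

open List

namespace S14

variable {A : Type*} {B : Type*}

/-- The `n`-th image of a letter. -/
def Phi (φ : A → List A) (n : ℕ) (a : A) : List A := (extM φ)^[n] [a]

lemma extM_singleton (φ : A → List A) (a : A) : extM φ [a] = φ a := by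
  simp [extM]

lemma iterate_extM (φ : A → List A) (n : ℕ) (x : List A) :
    (extM φ)^[n] x = x.flatMap (Phi φ n) := by
  induction n generalizing x with
  | zero => exact (List.flatMap_singleton' x).symm
  | succ n ih =>
    rw [Function.iterate_succ_apply, ih]
    show ((x.flatMap φ).flatMap _) = _
    rw [List.flatMap_assoc]
    congr 1
    funext a
    show (φ a).flatMap (Phi φ n) = Phi φ (n+1) a
    rw [Phi, Function.iterate_succ_apply, extM_singleton, ← ih]

lemma Phi_zero (φ : A → List A) (a : A) : Phi φ 0 a = [a] := rfl

lemma Phi_succ (φ : A → List A) (n : ℕ) (a : A) :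
    Phi φ (n+1) a = (φ a).flatMap (Phi φ n) := by
  rw [Phi, Function.iterate_succ_apply, extM_singleton, iterate_extM]

lemma flatMap_Phi_zero (φ : A → List A) (x : List A) : x.flatMap (Phi φ 0) = x := by
  rw [← iterate_extM]; rfl

lemma Phi_one (φ : A → List A) (a : A) : Phi φ 1 a = φ a := by
  rw [Phi_succ, flatMap_Phi_zero]

lemma Phi_add (φ : A → List A) (m n : ℕ) (a : A) :
    Phi φ (m + n) a = (Phi φ n a).flatMap (Phi φ m) := by
  rw [Phi, Function.iterate_add_apply, ← iterate_extM]
  rfl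

lemma bddLetter_iff {φ : A → List A} {b : A} :
    BddLetter φ b ↔ ∃ C, ∀ n, (Phi φ n b).length ≤ C := Iff.rfl

lemma length_flatMap_le {F : A → List B} {l : List A} {C : ℕ}
    (h : ∀ a ∈ l, (F a).length ≤ C) : (l.flatMap F).length ≤ C * l.length := by
  induction l with
  | nil => simp
  | cons a l ih =>
    have h1 := h a (List.mem_cons_self)
    have h2 := ih (fun b hb => h b (List.mem_cons_of_mem _ hb))
    simp only [List.flatMap_cons, List.length_append, List.length_cons, Nat.mul_succ]
    omega

lemma le_length_flatMap {F : A → List B} {l : List A} {a : A} (ha : a ∈ l) :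
    (F a).length ≤ (l.flatMap F).length := by
  obtain ⟨s, t, rfl⟩ := List.append_of_mem ha
  simp only [List.flatMap_append, List.flatMap_cons, List.length_append]
  omega

lemma exists_M [Fintype A] (φ : A → List A) : ∃ M, 1 ≤ M ∧ ∀ a, (φ a).length ≤ M := by
  refine ⟨(Finset.univ.sup fun a => (φ a).length) + 1,
    Nat.succ_le_succ (Nat.zero_le _), fun a => ?_⟩
  exact Nat.le_succ_of_le (Finset.le_sup (f := fun a => (φ a).length) (Finset.mem_univ a))

lemma exists_C [Fintype A] (φ : A → List A) :
    ∃ C, 1 ≤ C ∧ ∀ b, BddLetter φ b → ∀ n, (Phi φ n b).length ≤ C := by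
  classical
  have h : ∀ b : A, ∃ Cb : ℕ, BddLetter φ b → ∀ n, (Phi φ n b).length ≤ Cb := by
    intro b
    by_cases hb : BddLetter φ b
    · obtain ⟨Cb, hCb⟩ := hb
      exact ⟨Cb, fun _ n => hCb n⟩
    · exact ⟨0, fun h' => absurd h' hb⟩
  choose f hf using h
  refine ⟨(Finset.univ.sup f) + 1, Nat.succ_le_succ (Nat.zero_le _), fun b hb n => ?_⟩
  exact (hf b hb n).trans (Nat.le_succ_of_le (Finset.le_sup (Finset.mem_univ b)))

lemma bdd_of_mem_phi {φ : A → List A} {b c : A} {n : ℕ} (hb : BddLetter φ b)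
    (hc : c ∈ Phi φ n b) : BddLetter φ c := by
  obtain ⟨C, hC⟩ := hb
  rw [bddLetter_iff]
  refine ⟨C, fun m => ?_⟩
  have h1 : (Phi φ m c).length ≤ ((Phi φ n b).flatMap (Phi φ m)).length := le_length_flatMap hc
  rw [← Phi_add] at h1
  exact h1.trans (hC (m + n))

lemma length_Phi_le_pow {φ : A → List A} {M : ℕ} (hM : ∀ a, (φ a).length ≤ M) :
    ∀ (m : ℕ) (a : A), (Phi φ m a).length ≤ M ^ m := by
  intro m
  induction m with
  | zero => intro a; simp [Phi]
  | succ m ih =>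
    intro a
    rw [Phi_succ]
    calc ((φ a).flatMap (Phi φ m)).length ≤ M ^ m * (φ a).length :=
          length_flatMap_le (fun c _ => ih c)
      _ ≤ M ^ m * M := Nat.mul_le_mul_left _ (hM a)
      _ = M ^ (m+1) := (pow_succ M m).symm

lemma bdd_of_forall [Fintype A] {φ : A → List A} {a : A} {n : ℕ}
    (h : ∀ c ∈ Phi φ n a, BddLetter φ c) : BddLetter φ a := by
  obtain ⟨C, hC1, hC⟩ := exists_C φ
  obtain ⟨M, hM1, hM⟩ := exists_M φ
  rw [bddLetter_iff]
  refine ⟨C * (Phi φ n a).length + M ^ n, fun m => ?_⟩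
  rcases le_or_gt n m with hnm | hnm
  · have he : Phi φ m a = (Phi φ n a).flatMap (Phi φ (m - n)) := by
      rw [← Phi_add]
      congr 1
      omega
    rw [he]
    have := length_flatMap_le (F := Phi φ (m - n)) (l := Phi φ n a) (C := C)
      (fun c hc => hC c (h c hc) (m - n))
    omega
  · have h1 : (Phi φ m a).length ≤ M ^ m := length_Phi_le_pow hM m a
    have h2 : M ^ m ≤ M ^ n := Nat.pow_le_pow_right hM1 (le_of_lt hnm)
    omega

lemma exists_unbdd_mem [Fintype A] {φ : A → List A} {a : A} (ha : ¬BddLetter φ a) (n : ℕ) :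
    ∃ c ∈ Phi φ n a, ¬BddLetter φ c := by
  by_contra h
  push_neg at h
  exact ha (bdd_of_forall h)

/-! ### Splitting lemmas for prefixes, suffixes and infixes of appends and flatMaps -/

lemma prefix_append_cases {u v w : List A} (h : u <+: v ++ w) :
    u <+: v ∨ ∃ u', u = v ++ u' ∧ u' <+: w := by
  obtain ⟨t, ht⟩ := h
  rcases List.append_eq_append_iff.mp ht with ⟨a, h1, _⟩ | ⟨c, h1, h2⟩
  · exact Or.inl ⟨a, h1.symm⟩
  · exact Or.inr ⟨c, h1, ⟨t, h2.symm⟩⟩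

lemma suffix_append_cases {u v w : List A} (h : u <:+ v ++ w) :
    u <:+ w ∨ ∃ u', u = u' ++ w ∧ u' <:+ v := by
  obtain ⟨t, ht⟩ := h
  rcases List.append_eq_append_iff.mp ht with ⟨a, h1, h2⟩ | ⟨c, h1, h2⟩
  · exact Or.inr ⟨a, h2, ⟨t, h1.symm⟩⟩
  · exact Or.inl ⟨c, h2.symm⟩

lemma infix_append_cases {u v w : List A} (h : u <:+: v ++ w) :
    u <:+: v ∨ u <:+: w ∨ ∃ s p, u = s ++ p ∧ s <:+ v ∧ p <+: w := by
  obtain ⟨pre, post, he⟩ := h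
  have h1 : pre ++ u <+: v ++ w := ⟨post, by rw [← he]⟩
  rcases prefix_append_cases h1 with h2 | ⟨u', h2, h3⟩
  · left
    exact ((List.suffix_append pre u).isInfix).trans h2.isInfix
  · have h4 : u <:+ v ++ u' := ⟨pre, h2⟩
    rcases suffix_append_cases h4 with h5 | ⟨s, h5, h6⟩
    · right; left
      exact h5.isInfix.trans h3.isInfix
    · right; right
      exact ⟨s, u', h5, h6, h3⟩

lemma prefix_flatMap (F : A → List B) :
    ∀ (x : List A) (p : List B), p <+: x.flatMap F →
      ∃ z rest p', x = z ++ rest ∧ p = z.flatMap F ++ p' ∧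
        (p' = [] ∨ ∃ d rest', rest = d :: rest' ∧ p' <+: F d) := by
  intro x
  induction x with
  | nil =>
    intro p hp
    simp only [List.flatMap_nil, List.prefix_nil] at hp
    exact ⟨[], [], [], rfl, by simp only [List.flatMap_nil, List.nil_append]; exact hp,
      Or.inl rfl⟩
  | cons a x ih =>
    intro p hp
    rw [List.flatMap_cons] at hp
    rcases prefix_append_cases hp with h1 | ⟨p₂, h1, h2⟩
    · exact ⟨[], a :: x, p, rfl, by simp, Or.inr ⟨a, x, rfl, h1⟩⟩
    · obtain ⟨z, rest, p', hx, hp2, hcase⟩ := ih p₂ h2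
      exact ⟨a :: z, rest, p', by rw [hx]; rfl,
        by rw [h1, hp2, List.flatMap_cons, List.append_assoc], hcase⟩

lemma infix_flatMap_decomp [Inhabited A] (F : A → List B) :
    ∀ (x : List A) (v : List B), v <:+: x.flatMap F →
      (∃ c, v <:+: F c) ∨ ∃ (c d : A) (z : List A) (s p : List B),
        z.length ≤ x.length ∧ s <:+ F c ∧ p <+: F d ∧ v = s ++ z.flatMap F ++ p := by
  intro x
  induction x with
  | nil =>
    intro v hv
    simp only [List.flatMap_nil] at hv
    have hv' : v = [] := List.eq_nil_of_infix_nil hv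
    right
    exact ⟨default, default, [], [], [], by simp, List.nil_suffix, List.nil_prefix,
      by simp [hv']⟩
  | cons a x ih =>
    intro v hv
    rw [List.flatMap_cons] at hv
    rcases infix_append_cases hv with h1 | h1 | ⟨s, p, h1, h2, h3⟩
    · exact Or.inl ⟨a, h1⟩
    · rcases ih v h1 with h2 | ⟨c, d, z, s, p, hz, hs, hp, hv'⟩
      · exact Or.inl h2
      · exact Or.inr ⟨c, d, z, s, p, hz.trans (Nat.le_succ _), hs, hp, hv'⟩
    · obtain ⟨z, rest, p', hx, hp2, hcase⟩ := prefix_flatMap F x p h3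
      rcases hcase with rfl | ⟨d, rest', _, hpd⟩
      · refine Or.inr ⟨a, default, z, s, [], ?_, h2, List.nil_prefix, ?_⟩
        · rw [hx]; simp only [List.length_append, List.length_cons]; omega
        · rw [h1, hp2]; simp
      · refine Or.inr ⟨a, d, z, s, p', ?_, h2, hpd, ?_⟩
        · rw [hx]; simp only [List.length_append, List.length_cons]; omega
        · rw [h1, hp2, List.append_assoc]

/-! ### The ancestry decomposition -/

lemma ancestry [Fintype A] [Inhabited A] (φ : A → List A) (M : ℕ)
    (hM : ∀ a, (φ a).length ≤ M) (hM1 : 1 ≤ M) :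
    ∀ (n : ℕ) (x v : List A), v <:+: x.flatMap (Phi φ n) → (∀ a ∈ v, BddLetter φ a) →
      ∃ m, m ≤ n ∧ ∃ (c d : A) (z s p : List A),
        z.length ≤ max x.length M ∧ (∀ a ∈ z, BddLetter φ a) ∧
        s <:+ Phi φ m c ∧ p <+: Phi φ m d ∧ v = s ++ z.flatMap (Phi φ m) ++ p := by
  intro n
  induction n with
  | zero =>
    intro x v hv hvb
    refine ⟨0, le_refl _, default, default, v, [], [], ?_, hvb, List.nil_suffix,
      List.nil_prefix, ?_⟩
    · have h0 : v.length ≤ (x.flatMap (Phi φ 0)).length := hv.length_le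
      rw [flatMap_Phi_zero] at h0
      exact h0.trans (le_max_left _ _)
    · rw [flatMap_Phi_zero]; simp
  | succ n ih =>
    intro x v hv hvb
    rcases infix_flatMap_decomp (Phi φ (n+1)) x v hv with ⟨c, hc⟩ | ⟨c, d, z, s, p, hz, hs, hp, hve⟩
    · -- v is an infix of Phi φ (n+1) c = (φ c).flatMap (Phi φ n)
      rw [Phi_succ] at hc
      obtain ⟨m, hm, c', d', z, s, p, hz, hzb, hs, hp, hve⟩ := ih (φ c) v hc hvb
      refine ⟨m, hm.trans (Nat.le_succ _), c', d', z, s, p, ?_, hzb, hs, hp, hve⟩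
      refine hz.trans ?_
      have : (φ c).length ≤ M := hM c
      exact le_trans (max_le (this.trans (le_max_right _ _)) (le_max_right _ _)) (le_refl _)
    · -- direct decomposition at level n+1
      refine ⟨n+1, le_refl _, c, d, z, s, p, hz.trans (le_max_left _ _), ?_, hs, hp, hve⟩
      intro a ha
      apply bdd_of_forall (n := n+1)
      intro b hb
      apply hvb
      rw [hve]
      have hbm : b ∈ z.flatMap (Phi φ (n+1)) := List.mem_flatMap.mpr ⟨a, ha, hb⟩
      exact List.mem_append.mpr (Or.inl (List.mem_append.mpr (Or.inr hbm)))

/-! ### wpow lemmas -/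

lemma wpow_zero (u : List A) : wpow u 0 = [] := rfl

lemma wpow_succ (u : List A) (k : ℕ) : wpow u (k+1) = u ++ wpow u k := by
  simp [wpow, List.replicate_succ]

lemma wpow_succ' (u : List A) (k : ℕ) : wpow u (k+1) = wpow u k ++ u := by
  simp [wpow, List.replicate_succ']

lemma wpow_nil (k : ℕ) : wpow ([] : List A) k = [] := by
  induction k with
  | zero => rfl
  | succ k ih => rw [wpow_succ, ih]; rfl

lemma wpow_reverse (u : List A) (k : ℕ) : (wpow u k).reverse = wpow u.reverse k := by
  induction k with
  | zero => rfl
  | succ k ih => rw [wpow_succ, List.reverse_append, ih, ← wpow_succ']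

lemma suffix_wpow (u : List A) :
    ∀ (k : ℕ) (s : List A), s <:+ wpow u k → ∃ α j, j ≤ k ∧ α <:+ u ∧ s = α ++ wpow u j := by
  intro k
  induction k with
  | zero =>
    intro s hs
    rw [wpow_zero, List.suffix_nil] at hs
    exact ⟨[], 0, le_refl _, List.nil_suffix, by simp [hs, wpow_zero]⟩
  | succ k ih =>
    intro s hs
    rw [wpow_succ] at hs
    rcases suffix_append_cases hs with h1 | ⟨s', h1, h2⟩
    · obtain ⟨α, j, hj, hα, he⟩ := ih s h1
      exact ⟨α, j, hj.trans (Nat.le_succ _), hα, he⟩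
    · exact ⟨s', k, Nat.le_succ _, h2, h1⟩

/-! ### Maximal bounded suffix machinery -/

noncomputable def pb (φ : A → List A) : A → Bool :=
  fun a => @decide (BddLetter φ a) (Classical.propDecidable _)

lemma pb_eq_true {φ : A → List A} {a : A} : pb φ a = true ↔ BddLetter φ a := by
  simp [pb]

lemma takeWhile_eq_self_of {q : A → Bool} {l : List A} (h : ∀ a ∈ l, q a = true) :
    l.takeWhile q = l := by
  induction l with
  | nil => rfl
  | cons a l ih =>
    rw [List.takeWhile_cons_of_pos (h a (List.mem_cons_self)),
      ih (fun b hb => h b (List.mem_cons_of_mem _ hb))]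

lemma takeWhile_append_of_all {q : A → Bool} {u v : List A} (h : ∀ a ∈ u, q a = true) :
    (u ++ v).takeWhile q = u ++ v.takeWhile q := by
  induction u with
  | nil => simp
  | cons a u ih =>
    rw [List.cons_append, List.takeWhile_cons_of_pos (h a (List.mem_cons_self)),
      ih (fun b hb => h b (List.mem_cons_of_mem _ hb))]
    rfl

lemma takeWhile_append_of_exists {q : A → Bool} {u v : List A} (h : ∃ a ∈ u, ¬ q a = true) :
    (u ++ v).takeWhile q = u.takeWhile q := by
  induction u with
  | nil => simp at h
  | cons a u ih =>
    by_cases hqa : q a = true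
    · rw [List.cons_append, List.takeWhile_cons_of_pos hqa, List.takeWhile_cons_of_pos hqa]
      congr 1
      apply ih
      obtain ⟨b, hb, hqb⟩ := h
      rcases List.mem_cons.mp hb with rfl | hb'
      · exact absurd hqa hqb
      · exact ⟨b, hb', hqb⟩
    · rw [List.cons_append, List.takeWhile_cons_of_neg hqa, List.takeWhile_cons_of_neg hqa]

lemma prefix_takeWhile {q : A → Bool} :
    ∀ {s l : List A}, s <+: l → (∀ a ∈ s, q a = true) → s <+: l.takeWhile q := by
  intro s
  induction s with
  | nil => intro l _ _; exact List.nil_prefix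
  | cons a s ih =>
    intro l hs hq
    match l, hs with
    | b :: l, hs =>
      obtain ⟨rfl, hs'⟩ := List.cons_prefix_cons.mp hs
      rw [List.takeWhile_cons_of_pos (hq a (List.mem_cons_self))]
      exact List.cons_prefix_cons.mpr ⟨rfl, ih hs' (fun b hb => hq b (List.mem_cons_of_mem _ hb))⟩

noncomputable def mbs (φ : A → List A) (l : List A) : List A :=
  (l.reverse.takeWhile (pb φ)).reverse

lemma mbs_suffix (φ : A → List A) (l : List A) : mbs φ l <:+ l := by
  rw [← List.reverse_prefix, mbs, List.reverse_reverse]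
  exact List.takeWhile_prefix _

lemma mbs_bdd (φ : A → List A) {l : List A} : ∀ a ∈ mbs φ l, BddLetter φ a := by
  intro a ha
  rw [mbs, List.mem_reverse] at ha
  exact pb_eq_true.mp (List.mem_takeWhile_imp ha)

lemma suffix_mbs (φ : A → List A) {l s : List A} (hs : s <:+ l)
    (h : ∀ a ∈ s, BddLetter φ a) : s <:+ mbs φ l := by
  rw [← List.reverse_prefix, mbs, List.reverse_reverse]
  apply prefix_takeWhile (List.reverse_prefix.mpr hs)
  intro a ha
  rw [List.mem_reverse] at ha
  exact pb_eq_true.mpr (h a ha)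

lemma mbs_append_bdd (φ : A → List A) {x y : List A} (h : ∀ a ∈ y, BddLetter φ a) :
    mbs φ (x ++ y) = mbs φ x ++ y := by
  rw [mbs, List.reverse_append, takeWhile_append_of_all
    (fun a ha => pb_eq_true.mpr (h a (List.mem_reverse.mp ha))), List.reverse_append,
    List.reverse_reverse]
  rfl

lemma mbs_append_unbdd (φ : A → List A) {x y : List A} (h : ∃ a ∈ y, ¬BddLetter φ a) :
    mbs φ (x ++ y) = mbs φ y := by
  rw [mbs, List.reverse_append, takeWhile_append_of_exists ?_]
  · rfl
  · obtain ⟨a, ha, hna⟩ := h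
    exact ⟨a, List.mem_reverse.mpr ha, fun hq => hna (pb_eq_true.mp hq)⟩

lemma mbs_singleton_unbdd (φ : A → List A) {c : A} (hc : ¬BddLetter φ c) : mbs φ [c] = [] := by
  have hf : pb φ c = false := by
    rw [← Bool.not_eq_true]
    exact fun hq => hc (pb_eq_true.mp hq)
  simp [mbs, List.takeWhile, hf]

/-! ### Decomposition of `φ c` at the last unbounded letter -/

noncomputable def tau (φ : A → List A) (c : A) : List A := mbs φ (φ c)

noncomputable def eLast (φ : A → List A) (c : A) : A :=
  ((φ c).reverse.dropWhile (pb φ)).headD c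

lemma tau_bdd (φ : A → List A) {c : A} : ∀ a ∈ tau φ c, BddLetter φ a := mbs_bdd φ

lemma tau_length_le (φ : A → List A) (c : A) : (tau φ c).length ≤ (φ c).length :=
  (mbs_suffix φ (φ c)).length_le

lemma eLast_spec [Fintype A] (φ : A → List A) {c : A} (hc : ¬BddLetter φ c) :
    ¬BddLetter φ (eLast φ c) ∧ ∃ ρ, φ c = ρ ++ eLast φ c :: tau φ c := by
  have hex : ∃ a ∈ φ c, ¬BddLetter φ a := by
    have := exists_unbdd_mem hc 1
    rwa [Phi_one] at this
  have hd : (φ c).reverse.dropWhile (pb φ) ≠ [] := by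
    intro hnil
    have htk : (φ c).reverse.takeWhile (pb φ) = (φ c).reverse := by
      have : (φ c).reverse.takeWhile (pb φ) ++ (φ c).reverse.dropWhile (pb φ) = (φ c).reverse :=
        List.takeWhile_append_dropWhile
      rwa [hnil, List.append_nil] at this
    obtain ⟨a, ha, hna⟩ := hex
    have ha' : a ∈ (φ c).reverse.takeWhile (pb φ) := by
      rw [htk, List.mem_reverse]; exact ha
    exact hna (pb_eq_true.mp (List.mem_takeWhile_imp ha'))
  obtain ⟨d, rest, hdr⟩ : ∃ d rest, (φ c).reverse.dropWhile (pb φ) = d :: rest := by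
    cases h : (φ c).reverse.dropWhile (pb φ) with
    | nil => exact absurd h hd
    | cons d rest => exact ⟨d, rest, rfl⟩
  have hE : eLast φ c = d := by rw [eLast, hdr]; rfl
  have hdnb : ¬BddLetter φ d := by
    intro hb
    have hh := List.head_dropWhile_not (pb φ) hd
    have h1 : ((φ c).reverse.dropWhile (pb φ)).head? = some d := by rw [hdr]; rfl
    have h2 : ((φ c).reverse.dropWhile (pb φ)).head? =
        some (((φ c).reverse.dropWhile (pb φ)).head hd) := List.head?_eq_head hd
    have h3 : ((φ c).reverse.dropWhile (pb φ)).head hd = d := by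
      rw [h2] at h1; exact Option.some.inj h1
    rw [h3] at hh
    rw [pb_eq_true.mpr hb] at hh
    cases hh
  refine ⟨by rw [hE]; exact hdnb, ⟨rest.reverse, ?_⟩⟩
  rw [hE]
  have hsplit : (φ c).reverse.takeWhile (pb φ) ++ (d :: rest) = (φ c).reverse := by
    rw [← hdr, List.takeWhile_append_dropWhile]
  have hrev := congrArg List.reverse hsplit
  rw [List.reverse_append, List.reverse_reverse] at hrev
  rw [← hrev, List.reverse_cons]
  simp [tau, mbs, List.append_assoc]

lemma eLast_unbdd [Fintype A] (φ : A → List A) {c : A} (hc : ¬BddLetter φ c) :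
    ¬BddLetter φ (eLast φ c) := (eLast_spec φ hc).1

lemma eLast_iter_unbdd [Fintype A] (φ : A → List A) {c : A} (hc : ¬BddLetter φ c) (j : ℕ) :
    ¬BddLetter φ ((eLast φ)^[j] c) := by
  induction j with
  | zero => exact hc
  | succ j ih =>
    rw [Function.iterate_succ_apply']
    exact eLast_unbdd φ ih

/-! ### The recursion for the maximal bounded suffix of `Phi φ m c` -/

lemma Ms_succ [Fintype A] (φ : A → List A) {c : A} (hc : ¬BddLetter φ c) (m : ℕ) :
    mbs φ (Phi φ (m+1) c) = mbs φ (Phi φ m (eLast φ c)) ++ (tau φ c).flatMap (Phi φ m) := by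
  obtain ⟨hec, ρ, hρ⟩ := eLast_spec φ hc
  rw [Phi_succ, hρ, List.flatMap_append, List.flatMap_cons, ← List.append_assoc]
  rw [mbs_append_bdd φ ?_]
  · congr 1
    apply mbs_append_unbdd
    exact exists_unbdd_mem hec m
  · intro a ha
    rw [List.mem_flatMap] at ha
    obtain ⟨b, hb, hab⟩ := ha
    exact bdd_of_mem_phi (tau_bdd φ b hb) hab

lemma Ms_len [Fintype A] (φ : A → List A) {C M : ℕ}
    (hC : ∀ b, BddLetter φ b → ∀ n, (Phi φ n b).length ≤ C) (hM : ∀ a, (φ a).length ≤ M) :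
    ∀ (m : ℕ) {c : A}, ¬BddLetter φ c → (mbs φ (Phi φ m c)).length ≤ m * (C * M) := by
  intro m
  induction m with
  | zero =>
    intro c hc
    rw [Phi_zero, mbs_singleton_unbdd φ hc]
    simp
  | succ m ih =>
    intro c hc
    rw [Ms_succ φ hc]
    have h1 := ih (eLast_unbdd φ hc)
    have h2 : ((tau φ c).flatMap (Phi φ m)).length ≤ C * M := by
      calc ((tau φ c).flatMap (Phi φ m)).length ≤ C * (tau φ c).length :=
            length_flatMap_le (fun b hb => hC b (tau_bdd φ b hb) m)
        _ ≤ C * M := Nat.mul_le_mul_left _ ((tau_length_le φ c).trans (hM c))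
    rw [List.length_append]
    have h3 : (m+1) * (C * M) = m * (C * M) + C * M := by ring
    omega

/-! ### The tail tower `Tm` -/

noncomputable def Tm (φ : A → List A) (m : ℕ) : ℕ → A → List A
  | 0, _ => []
  | t+1, c => Tm φ m t (eLast φ c) ++ (tau φ c).flatMap (Phi φ (m + t))

lemma Tm_zero (φ : A → List A) (m : ℕ) (c : A) : Tm φ m 0 c = [] := rfl

lemma Tm_succ (φ : A → List A) (m t : ℕ) (c : A) :
    Tm φ m (t+1) c = Tm φ m t (eLast φ c) ++ (tau φ c).flatMap (Phi φ (m + t)) := rfl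

lemma Tm_bdd (φ : A → List A) : ∀ (t m : ℕ) (c : A), ∀ a ∈ Tm φ m t c, BddLetter φ a := by
  intro t
  induction t with
  | zero => intro m c a ha; simp [Tm_zero] at ha
  | succ t ih =>
    intro m c a ha
    rw [Tm_succ, List.mem_append] at ha
    rcases ha with ha | ha
    · exact ih m (eLast φ c) a ha
    · rw [List.mem_flatMap] at ha
      obtain ⟨b, hb, hab⟩ := ha
      exact bdd_of_mem_phi (tau_bdd φ b hb) hab

lemma Tm_len (φ : A → List A) {C M : ℕ}
    (hC : ∀ b, BddLetter φ b → ∀ n, (Phi φ n b).length ≤ C) (hM : ∀ a, (φ a).length ≤ M) :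
    ∀ (t m : ℕ) (c : A), (Tm φ m t c).length ≤ t * (C * M) := by
  intro t
  induction t with
  | zero => intro m c; simp [Tm_zero]
  | succ t ih =>
    intro m c
    rw [Tm_succ, List.length_append]
    have h1 := ih m (eLast φ c)
    have h2 : ((tau φ c).flatMap (Phi φ (m + t))).length ≤ C * M := by
      calc ((tau φ c).flatMap (Phi φ (m+t))).length ≤ C * (tau φ c).length :=
            length_flatMap_le (fun b hb => hC b (tau_bdd φ b hb) (m+t))
        _ ≤ C * M := Nat.mul_le_mul_left _ ((tau_length_le φ c).trans (hM c))
    have h3 : (t+1) * (C * M) = t * (C * M) + C * M := by ring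
    omega

lemma flatMap_congr {F G : A → List B} {l : List A} (h : ∀ a ∈ l, F a = G a) :
    l.flatMap F = l.flatMap G := by
  induction l with
  | nil => rfl
  | cons a l ih =>
    rw [List.flatMap_cons, List.flatMap_cons, h a (List.mem_cons_self),
      ih (fun b hb => h b (List.mem_cons_of_mem _ hb))]

lemma Ms_unroll [Fintype A] (φ : A → List A) (m : ℕ) :
    ∀ (t : ℕ) {c : A}, ¬BddLetter φ c →
      mbs φ (Phi φ (m + t) c) = mbs φ (Phi φ m ((eLast φ)^[t] c)) ++ Tm φ m t c := by
  intro t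
  induction t with
  | zero => intro c _; simp [Tm_zero]
  | succ t ih =>
    intro c hc
    rw [show m + (t+1) = (m + t) + 1 from rfl, Ms_succ φ hc (m + t), ih (eLast_unbdd φ hc),
      Function.iterate_succ_apply, Tm_succ, List.append_assoc]

lemma Tm_period (φ : A → List A) {Q P : ℕ}
    (hper : ∀ b, BddLetter φ b → ∀ m, Q ≤ m → Phi φ (m + P) b = Phi φ m b) :
    ∀ (t m : ℕ), Q ≤ m → ∀ c, Tm φ (m + P) t c = Tm φ m t c := by
  intro t
  induction t with
  | zero => intro m _ c; rfl
  | succ t ih =>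
    intro m hm c
    rw [Tm_succ, Tm_succ, ih m hm]
    congr 1
    apply flatMap_congr
    intro b hb
    rw [show m + P + t = (m + t) + P by omega]
    exact hper b (tau_bdd φ b hb) (m + t) (le_trans hm (Nat.le_add_right _ _))

lemma Tm_shift (φ : A → List A) :
    ∀ (t s m : ℕ) (c : A),
      Tm φ m (t + s) c = Tm φ m s ((eLast φ)^[t] c) ++ Tm φ (m + s) t c := by
  intro t
  induction t with
  | zero => intro s m c; simp [Tm_zero]
  | succ t ih =>
    intro s m c
    rw [show t + 1 + s = (t + s) + 1 by omega, Tm_succ, ih s m (eLast φ c),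
      Function.iterate_succ_apply, Tm_succ, show m + (t + s) = m + s + t by omega,
      List.append_assoc]

/-! ### Periodicity -/

lemma period_iter {β : Sort*} {F : ℕ → β} {q p : ℕ} (h : ∀ m, q ≤ m → F (m + p) = F m) :
    ∀ (k m : ℕ), q ≤ m → F (m + k * p) = F m := by
  intro k
  induction k with
  | zero => intro m _; simp
  | succ k ih =>
    intro m hm
    rw [show m + (k+1) * p = (m + k * p) + p by ring,
      h _ (le_trans hm (Nat.le_add_right _ _)), ih m hm]

lemma exists_period_phi [Fintype A] (φ : A → List A) (C : ℕ)
    (hC : ∀ b, BddLetter φ b → ∀ n, (Phi φ n b).length ≤ C) :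
    ∃ Q P : ℕ, 1 ≤ Q ∧ 1 ≤ P ∧ ∀ b, BddLetter φ b → ∀ m, Q ≤ m → Phi φ (m + P) b = Phi φ m b := by
  haveI : Finite {l : List A | l.length ≤ C} := (List.finite_length_le A C).to_subtype
  set G : ℕ → A → {l : List A | l.length ≤ C} :=
    fun n a => ⟨(Phi φ n a).take C, by simp [Set.mem_setOf_eq]⟩ with hG
  obtain ⟨i, j, hne, hij⟩ := Finite.exists_ne_map_eq_of_infinite G
  have key : ∀ i j : ℕ, i < j → G i = G j →
      ∃ Q P : ℕ, 1 ≤ Q ∧ 1 ≤ P ∧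
        ∀ b, BddLetter φ b → ∀ m, Q ≤ m → Phi φ (m + P) b = Phi φ m b := by
    intro i j hlt heq
    have hPij : ∀ b, BddLetter φ b → Phi φ i b = Phi φ j b := by
      intro b hb
      have h1 : (Phi φ i b).take C = (Phi φ j b).take C :=
        congrArg Subtype.val (congrFun heq b)
      rwa [List.take_of_length_le (hC b hb i), List.take_of_length_le (hC b hb j)] at h1
    refine ⟨i + 1, j - i, Nat.succ_le_succ (Nat.zero_le _), by omega, ?_⟩
    intro b hb m hm
    obtain ⟨t, rfl⟩ : ∃ t, m = t + i := ⟨m - i, by omega⟩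
    rw [show t + i + (j - i) = t + j by omega]
    have hiter : ∀ k, Phi φ (t + k) b = (extM φ)^[t] (Phi φ k b) := fun k => by
      rw [Phi, Phi, Function.iterate_add_apply]
    rw [hiter j, hiter i, hPij b hb]
  rcases hne.lt_or_gt with hlt | hlt
  · exact key i j hlt hij
  · exact key j i hlt hij.symm

lemma exists_period_fun [Fintype A] (e : A → A) :
    ∃ Q P : ℕ, 1 ≤ Q ∧ 1 ≤ P ∧ ∀ m, Q ≤ m → e^[m + P] = e^[m] := by
  obtain ⟨i, j, hne, hij⟩ := Finite.exists_ne_map_eq_of_infinite (fun n => e^[n])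
  have key : ∀ i j : ℕ, i < j → e^[i] = e^[j] →
      ∃ Q P : ℕ, 1 ≤ Q ∧ 1 ≤ P ∧ ∀ m, Q ≤ m → e^[m + P] = e^[m] := by
    intro i j hlt heq
    refine ⟨i + 1, j - i, Nat.succ_le_succ (Nat.zero_le _), by omega, ?_⟩
    intro m hm
    obtain ⟨t, rfl⟩ : ∃ t, m = t + i := ⟨m - i, by omega⟩
    rw [show t + i + (j - i) = t + j by omega]
    rw [Function.iterate_add, Function.iterate_add, heq]
  rcases hne.lt_or_gt with hlt | hlt
  · exact key i j hlt hij
  · exact key j i hlt hij.symm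

/-! ### The structure of bounded suffixes of `Phi φ m c` -/

lemma suffix_structure [Fintype A] (φ : A → List A) :
    ∃ (R₁ : ℕ) (U : Set (List A)), U.Finite ∧ (∀ u ∈ U, u ≠ [] ∧ ∀ a ∈ u, BddLetter φ a) ∧
      ∀ (m : ℕ) (c : A) (s : List A), s <:+ Phi φ m c → (∀ a ∈ s, BddLetter φ a) →
        s.length < R₁ ∨ ∃ u ∈ U, ∃ k : ℕ, 0 < k ∧ ∃ α β : List A,
          s = α ++ wpow u k ++ β ∧ α.length < R₁ ∧ β.length < R₁ := by
  classical
  obtain ⟨C, hC1, hC⟩ := exists_C φ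
  obtain ⟨M, hM1, hM⟩ := exists_M φ
  obtain ⟨Q₁, P₁, hQ₁, hP₁, hper₁⟩ := exists_period_phi φ C hC
  obtain ⟨Q₂, P₂, hQ₂, hP₂, hper₂⟩ := exists_period_fun (eLast φ)
  set E := eLast φ with hEdef
  set Q := max Q₁ Q₂ with hQdef
  set P := P₁ * P₂ with hPdef
  have hQ : 1 ≤ Q := le_trans hQ₁ (le_max_left _ _)
  have hP : 1 ≤ P := Nat.one_le_iff_ne_zero.mpr (Nat.mul_ne_zero (by omega) (by omega))
  have hper : ∀ b, BddLetter φ b → ∀ m, Q ≤ m → Phi φ (m + P) b = Phi φ m b := by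
    intro b hb m hm
    have h := period_iter (F := fun n => Phi φ n b)
      (fun m' hm' => hper₁ b hb m' hm') P₂ m (le_trans (le_max_left _ _) hm)
    rwa [show P₂ * P₁ = P by rw [hPdef, Nat.mul_comm]] at h
  have hpere : ∀ m, Q ≤ m → E^[m + P] = E^[m] := by
    intro m hm
    have h := period_iter (F := fun n => E^[n])
      (fun m' hm' => hper₂ m' hm') P₁ m (le_trans (le_max_right _ _) hm)
    rwa [show P₁ * P₂ = P from rfl] at h
  have hQP : Q ≤ Q * P := by
    calc Q = Q * 1 := by ring
      _ ≤ Q * P := Nat.mul_le_mul_left Q hP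
  have hestab : ∀ k, Q ≤ k → ∀ x : A, E^[k * P] x = E^[Q * P] x := by
    intro k hk x
    rw [show k * P = Q * P + (k - Q) * P by rw [← Nat.add_mul]; congr 1; omega]
    exact congrFun (period_iter (F := fun n => E^[n]) hpere (k - Q) (Q * P) hQP) x
  set X := Q + P + Q * P + Q * P + P with hXdef
  set R₁ := C + X * (C * M) + (C * M) + 1 with hRdef
  have hCM1 : 1 ≤ C * M := Nat.one_le_iff_ne_zero.mpr (Nat.mul_ne_zero (by omega) (by omega))
  have key : ∀ y : ℕ, y ≤ X → y * (C * M) < R₁ := by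
    intro y hy
    have := Nat.mul_le_mul_right (C * M) hy
    omega
  set U : Set (List A) :=
    ((fun rc : ℕ × A => Tm φ (Q + rc.1) P (E^[Q * P] rc.2)) '' ((Set.Iio P) ×ˢ Set.univ))
      \ {[]} with hUdef
  have hUfin : U.Finite := by
    have h1 : ((Set.Iio P) ×ˢ (Set.univ : Set A)).Finite :=
      (Set.finite_Iio P).prod Set.finite_univ
    exact (h1.image fun rc : ℕ × A => Tm φ (Q + rc.1) P (E^[Q * P] rc.2)).subset
      Set.diff_subset
  have hUprop : ∀ u ∈ U, u ≠ [] ∧ ∀ a ∈ u, BddLetter φ a := by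
    rintro u ⟨⟨⟨r, c⟩, _, rfl⟩, hne⟩
    exact ⟨by simpa using hne, fun a ha => Tm_bdd φ P (Q + r) _ a ha⟩
  refine ⟨R₁, U, hUfin, hUprop, ?_⟩
  intro m c s hs hsb
  by_cases hc : BddLetter φ c
  · left
    have := (hs.length_le).trans (hC c hc m)
    omega
  · have hsm : s <:+ mbs φ (Phi φ m c) := suffix_mbs φ hs hsb
    have hslen := hsm.length_le
    by_cases hmQ : m < Q
    · left
      have h1 := Ms_len φ hC hM m hc
      have h2 : m * (C * M) ≤ Q * (C * M) := Nat.mul_le_mul_right (C * M) (le_of_lt hmQ)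
      have h3 : Q * (C * M) < R₁ := key Q (by omega)
      omega
    · push_neg at hmQ
      set r := (m - Q) % P with hrdef
      set k := (m - Q) / P with hkdef
      have hrP : r < P := Nat.mod_lt _ (by omega)
      have hm : m = (Q + r) + k * P := by
        have h0 : P * k + r = m - Q := Nat.div_add_mod (m - Q) P
        have h0' : k * P = P * k := Nat.mul_comm k P
        omega
      by_cases hkQ : k ≤ Q
      · left
        have h1 := Ms_len φ hC hM m hc
        have h2 : k * P ≤ Q * P := Nat.mul_le_mul_right P hkQ
        have h3 : m ≤ Q + P + Q * P := by omega
        have h4 : m * (C * M) ≤ (Q + P + Q * P) * (C * M) := Nat.mul_le_mul_right (C * M) h3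
        have h5 := key (Q + P + Q * P) (by omega)
        omega
      · push_neg at hkQ
        set chat := E^[Q * P] c with hchat
        have hchat_unbdd : ¬BddLetter φ chat := eLast_iter_unbdd φ hc _
        set u := Tm φ (Q + r) P chat with hu
        set A₀ := mbs φ (Phi φ (Q + r) chat) with hA₀
        set B₀ := Tm φ (Q + r) (Q * P) c with hB₀
        have hA₀len : A₀.length ≤ (Q + P) * (C * M) := by
          rw [hA₀]
          have h1 := Ms_len φ hC hM (Q + r) hchat_unbdd
          have h2 : (Q + r) * (C * M) ≤ (Q + P) * (C * M) :=
            Nat.mul_le_mul_right (C * M) (by omega)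
          omega
        have hB₀len : B₀.length ≤ (Q * P) * (C * M) := by
          rw [hB₀]; exact Tm_len φ hC hM (Q * P) (Q + r) c
        have hulen : u.length ≤ P * (C * M) := by
          rw [hu]; exact Tm_len φ hC hM P (Q + r) chat
        have QleQr : Q ≤ Q + r := Nat.le_add_right _ _
        have Tk : ∀ k', Q ≤ k' → Tm φ (Q + r) (k' * P) c = wpow u (k' - Q) ++ B₀ := by
          intro k' hk'
          induction k', hk' using Nat.le_induction with
          | base => rw [Nat.sub_self, wpow_zero, List.nil_append]
          | succ k' hk' ih =>
            rw [show (k' + 1) * P = k' * P + P by ring, Tm_shift φ (k' * P) P (Q + r) c,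
              hestab k' hk' c, ← hchat, Tm_period φ hper (k' * P) (Q + r) QleQr c, ih,
              show k' + 1 - Q = (k' - Q) + 1 by omega, wpow_succ, List.append_assoc]
        have hMs : mbs φ (Phi φ m c) = A₀ ++ (wpow u (k - Q) ++ B₀) := by
          have h1 := Ms_unroll φ (Q + r) (k * P) hc
          rw [hestab k (le_of_lt hkQ) c, ← hchat, Tk k (le_of_lt hkQ)] at h1
          rw [hm, h1]
        have keyA : (Q + P) * (C * M) < R₁ := key _ (by omega)
        have keyB : (Q * P) * (C * M) < R₁ := key _ (by omega)
        have keyu : P * (C * M) < R₁ := key _ (by omega)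
        by_cases hunil : u = []
        · left
          rw [hMs, hunil, wpow_nil] at hslen
          simp only [List.length_append, List.length_nil] at hslen
          have h5 := key (Q + P + Q * P) (by omega)
          have h6 : (Q + P) * (C * M) + (Q * P) * (C * M) = (Q + P + Q * P) * (C * M) := by
            ring
          omega
        · have hUu : u ∈ U := by
            refine ⟨⟨(r, c), ⟨hrP, Set.mem_univ _⟩, ?_⟩, by simpa using hunil⟩
            rw [hu, hchat]
          rw [hMs] at hsm
          rcases suffix_append_cases hsm with h1 | ⟨s'', h1, h2⟩
          · rcases suffix_append_cases h1 with h3 | ⟨s', h3, h4⟩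
            · left
              have := h3.length_le
              omega
            · obtain ⟨α, j, hj, hα, hαe⟩ := suffix_wpow u (k - Q) s' h4
              have hαl := hα.length_le
              rcases Nat.eq_zero_or_pos j with rfl | hjpos
              · left
                have hsl : s.length = α.length + B₀.length := by
                  rw [h3, hαe, wpow_zero, List.append_nil, List.length_append]
                have h5 := key (P + Q * P) (by omega)
                have h6 : P * (C * M) + (Q * P) * (C * M) = (P + Q * P) * (C * M) := by ring
                omega
              · right
                refine ⟨u, hUu, j, hjpos, α, B₀, ?_, by omega, by omega⟩
                rw [h3, hαe]
          · right
            refine ⟨u, hUu, k - Q, by omega, s'', B₀, ?_, ?_, by omega⟩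
            · rw [h1, List.append_assoc]
            · have := h2.length_le
              omega

/-! ### Reversal: transfer to prefixes -/

lemma extM_reverse (φ : A → List A) (l : List A) :
    (extM φ l).reverse = extM (fun a => (φ a).reverse) l.reverse := by
  rw [extM, extM, List.reverse_flatMap]
  rfl

lemma Phi_reverse (φ : A → List A) : ∀ (n : ℕ) (a : A),
    Phi (fun x => (φ x).reverse) n a = (Phi φ n a).reverse := by
  intro n
  induction n with
  | zero => intro a; rfl
  | succ n ih =>
    intro a
    have h1 : Phi (fun x => (φ x).reverse) (n+1) a
        = extM (fun x => (φ x).reverse) (Phi (fun x => (φ x).reverse) n a) := by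
      rw [Phi, Phi, Function.iterate_succ_apply']
    have h2 : Phi φ (n+1) a = extM φ (Phi φ n a) := by
      rw [Phi, Phi, Function.iterate_succ_apply']
    rw [h1, ih a, h2, extM_reverse φ (Phi φ n a)]

lemma bdd_reverse (φ : A → List A) (b : A) :
    BddLetter (fun x => (φ x).reverse) b ↔ BddLetter φ b := by
  have hlen : ∀ n, ((extM (fun x => (φ x).reverse))^[n] [b]).length
      = ((extM φ)^[n] [b]).length := by
    intro n
    have h := Phi_reverse φ n b
    rw [Phi, Phi] at h
    rw [h, List.length_reverse]
  constructor
  · rintro ⟨C, hCb⟩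
    exact ⟨C, fun n => by rw [← hlen n]; exact hCb n⟩
  · rintro ⟨C, hCb⟩
    exact ⟨C, fun n => by rw [hlen n]; exact hCb n⟩

lemma prefix_structure [Fintype A] (φ : A → List A) :
    ∃ (R₂ : ℕ) (U : Set (List A)), U.Finite ∧ (∀ u ∈ U, u ≠ [] ∧ ∀ a ∈ u, BddLetter φ a) ∧
      ∀ (m : ℕ) (d : A) (p : List A), p <+: Phi φ m d → (∀ a ∈ p, BddLetter φ a) →
        p.length < R₂ ∨ ∃ u ∈ U, ∃ k : ℕ, 0 < k ∧ ∃ α β : List A,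
          p = α ++ wpow u k ++ β ∧ α.length < R₂ ∧ β.length < R₂ := by
  obtain ⟨R₂, U₀, hfin, hprop, hmain⟩ := suffix_structure (fun x => (φ x).reverse)
  refine ⟨R₂, List.reverse '' U₀, hfin.image _, ?_, ?_⟩
  · rintro u ⟨u₀, hu₀, rfl⟩
    obtain ⟨hne, hbd⟩ := hprop u₀ hu₀
    refine ⟨by simpa using hne, fun a ha => ?_⟩
    rw [List.mem_reverse] at ha
    exact (bdd_reverse φ a).mp (hbd a ha)
  · intro m d p hp hpb
    have h1 : p.reverse <:+ Phi (fun x => (φ x).reverse) m d := by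
      rw [Phi_reverse]
      exact hp.reverse
    have h2 : ∀ a ∈ p.reverse, BddLetter (fun x => (φ x).reverse) a := fun a ha =>
      (bdd_reverse φ a).mpr (hpb a (List.mem_reverse.mp ha))
    rcases hmain m d p.reverse h1 h2 with h | ⟨u, hu, k, hk, α, β, he, hα, hβ⟩
    · left; simpa using h
    · right
      refine ⟨u.reverse, ⟨u, hu, rfl⟩, k, hk, β.reverse, α.reverse, ?_,
        by simpa using hβ, by simpa using hα⟩
      have h3 := congrArg List.reverse he
      rw [List.reverse_reverse] at h3
      rw [h3, List.reverse_append, List.reverse_append, wpow_reverse, List.append_assoc]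

end S14

end Stmt14Aux
/-- (Theorem 12 of Klouda–Starosta 2013.) For a pushy D0L-system there exist
`R_G ∈ ℕ` and a finite set `𝒰` of non-empty words over bounded letters such that every
bounded-letter element of `L_G` is of the form `w₁`, `w₁u₁^{k₁}w₂` or `w₁u₁^{k₁}w₂u₂^{k₂}w₃`
with `u₁, u₂ ∈ 𝒰`, `|w_j| < R_G` and `k₁, k₂ ≥ 1`. -/
theorem stmt14 {A : Type*} [Fintype A] (φ : A → List A) (w : List A) (hφ : NonErasing φ)
    (hpushy : Pushy φ w) :
    ∃ R : ℕ, Thm12Prop φ w R := by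
  classical
  clear hφ hpushy
  rcases isEmpty_or_nonempty A with hA | hA
  · refine ⟨1, ∅, Set.finite_empty, by simp, ?_⟩
    intro v _ _
    left
    cases v with
    | nil => simp
    | cons a _ => exact (hA.false a).elim
  · haveI : Inhabited A := Classical.inhabited_of_nonempty hA
    obtain ⟨C, hC1, hC⟩ := S14.exists_C φ
    obtain ⟨M, hM1, hM⟩ := S14.exists_M φ
    obtain ⟨R₁, U₁, hU₁fin, hU₁prop, hsuf⟩ := S14.suffix_structure φ
    obtain ⟨R₂, U₂, hU₂fin, hU₂prop, hpre⟩ := S14.prefix_structure φ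
    refine ⟨R₁ + R₂ + C * (max w.length M) + 1, U₁ ∪ U₂, hU₁fin.union hU₂fin, ?_, ?_⟩
    · rintro u (hu | hu)
      exacts [hU₁prop u hu, hU₂prop u hu]
    · intro v hv hvb
      obtain ⟨n, hn⟩ := hv
      rw [S14.iterate_extM] at hn
      obtain ⟨m, hmn, c, d, z, s, p, hzlen, hzb, hss, hpp, hv'⟩ :=
        S14.ancestry φ M hM hM1 n w v hn hvb
      have hsb : ∀ a ∈ s, BddLetter φ a := by
        intro a ha
        apply hvb
        rw [hv']
        exact List.mem_append.mpr (Or.inl (List.mem_append.mpr (Or.inl ha)))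
      have hpb : ∀ a ∈ p, BddLetter φ a := by
        intro a ha
        apply hvb
        rw [hv']
        exact List.mem_append.mpr (Or.inr ha)
      have hmid : (z.flatMap (S14.Phi φ m)).length ≤ C * (max w.length M) :=
        le_trans (S14.length_flatMap_le (fun a haz => hC a (hzb a haz) m))
          (Nat.mul_le_mul_left C hzlen)
      have hvlen : v.length = s.length + (z.flatMap (S14.Phi φ m)).length + p.length := by
        rw [hv', List.length_append, List.length_append]
      rcases hsuf m c s hss hsb with hshort | ⟨u₁, hu₁, k₁, hk₁, α₁, β₁, hse, hα₁, hβ₁⟩ <;>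
        rcases hpre m d p hpp hpb with hpshort | ⟨u₂, hu₂, k₂, hk₂, α₂, β₂, hpe, hα₂, hβ₂⟩
      · left
        omega
      · right; left
        refine ⟨s ++ z.flatMap (S14.Phi φ m) ++ α₂, u₂, k₂, β₂, Or.inr hu₂, hk₂, ?_, ?_, ?_⟩
        · rw [hv', hpe]
          simp [List.append_assoc]
        · rw [List.length_append, List.length_append]
          omega
        · omega
      · right; left
        refine ⟨α₁, u₁, k₁, β₁ ++ z.flatMap (S14.Phi φ m) ++ p, Or.inl hu₁, hk₁, ?_, ?_, ?_⟩
        · rw [hv', hse]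
          simp [List.append_assoc]
        · omega
        · rw [List.length_append, List.length_append]
          omega
      · right; right
        refine ⟨α₁, u₁, k₁, β₁ ++ z.flatMap (S14.Phi φ m) ++ α₂, u₂, k₂, β₂,
          Or.inl hu₁, Or.inr hu₂, hk₁, hk₂, ?_, ?_, ?_, ?_⟩
        · rw [hv', hse, hpe]
          simp [List.append_assoc]
        · omega
        · rw [List.length_append, List.length_append]
          omega
        · omega
end
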